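/- Let k be a field, R an ℕ-graded commutative k-algebra (with R₀ ≅ k, finitely generated, finite-dimensional graded pieces), and suppose θ₁,…,θ_r is a regular sequence of homogeneous positive-degree elements of R. If (v_λ)_{λ∈Λ} is a family of homogeneous elements of R whose images in R/(θ₁,…,θ_r) form a basis of R/(θ₁,…,θ_r) as a k-vector space, then (v_λ)_{λ∈Λ} is a basis of R as a module over the k-subalgebra k[θ₁,…,θ_r] generated by θ₁,…,θ_r. -/

import Mathlib

/-- A sequence `θ 0, …, θ (r-1)` of elements of a commutative ring `R` is a regular
sequence if for each `j` the image of `θ j` in the quotient `R ⧸ (θ 0, …, θ (j-1))`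
is a non-zero-divisor, i.e. it is nonzero and multiplication by it is injective. -/
def IsRegularSeq {R : Type*} [CommRing R] {r : ℕ} (θ : Fin r → R) : Prop :=
  ∀ j : Fin r,
    Ideal.Quotient.mk (Ideal.span (θ '' {i | i < j})) (θ j) ≠ 0 ∧
      Function.Injective fun x : R ⧸ Ideal.span (θ '' {i | i < j}) =>
        Ideal.Quotient.mk (Ideal.span (θ '' {i | i < j})) (θ j) * x


open Finset DirectSum

section Koszul
variable {R : Type*} [CommRing R] {r : ℕ} {θ : Fin r → R}

lemma koszul_aux (hreg : IsRegularSeq θ) (s : ℕ) :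
    s ≤ r → ∀ w : Fin r → R, (∀ j : Fin r, ¬ ((j : ℕ) < s) → w j = 0) →
      (∑ j, θ j * w j) = 0 →
      ∃ u : Fin r → Fin r → R,
        (∀ i j, u i j = - u j i) ∧ (∀ i, u i i = 0) ∧
        (∀ i j : Fin r, (¬ ((i : ℕ) < s) ∨ ¬ ((j : ℕ) < s)) → u i j = 0) ∧
        (∀ j, w j = ∑ i, θ i * u i j) := by
  classical
  induction s with
  | zero =>
    intro _ w hw _
    exact ⟨0, by simp, by simp, by simp, fun j => by simp [hw j (by simp)]⟩
  | succ s ih =>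
    intro hs w hsupp hrel
    have hsr : s < r := hs
    set j₀ : Fin r := ⟨s, hsr⟩ with hj₀
    set J : Ideal R := Ideal.span (θ '' {i | i < j₀}) with hJ
    -- all terms other than j₀ are in J
    have hterm : ∀ j ∈ Finset.univ.erase j₀, θ j * w j ∈ J := by
      intro j hj
      have hne : j ≠ j₀ := (Finset.mem_erase.mp hj).1
      by_cases hjs : (j : ℕ) < s
      · have : θ j ∈ J := Ideal.subset_span ⟨j, by
          exact Fin.lt_def.mpr hjs, rfl⟩
        exact Ideal.mul_mem_right _ _ this
      · have : w j = 0 := by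
          apply hsupp j
          intro hlt
          rcases Nat.lt_succ_iff_lt_or_eq.mp hlt with h | h
          · exact hjs h
          · exact hne (Fin.ext h)
        simp [this]
    have hj₀mem : θ j₀ * w j₀ ∈ J := by
      have hsum : θ j₀ * w j₀ + ∑ j ∈ Finset.univ.erase j₀, θ j * w j = 0 :=
        (Finset.add_sum_erase Finset.univ (fun j => θ j * w j) (Finset.mem_univ j₀)).trans hrel
      rw [eq_neg_of_add_eq_zero_left hsum]
      exact neg_mem (Ideal.sum_mem _ hterm)
    -- use regularity
    have hw₀ : w j₀ ∈ J := by
      have h0 : Ideal.Quotient.mk J (θ j₀) * Ideal.Quotient.mk J (w j₀) = 0 := by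
        rw [← map_mul, Ideal.Quotient.eq_zero_iff_mem]; exact hj₀mem
      have hinj := (hreg j₀).2
      have := hinj (a₁ := Ideal.Quotient.mk J (w j₀)) (a₂ := 0) (by
        simpa using h0)
      rwa [← Ideal.Quotient.eq_zero_iff_mem]
    -- representation of w j₀
    obtain ⟨cl, hclsupp, hcl⟩ := (Finsupp.mem_span_image_iff_linearCombination R).mp hw₀
    set c : Fin r → R := fun i => if (i : ℕ) < s then cl i else 0 with hc
    have hcz : ∀ i : Fin r, ¬ ((i : ℕ) < s) → c i = 0 := fun i hi => if_neg hi
    have hcrep : ∑ i, θ i * c i = w j₀ := by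
      rw [← hcl, Finsupp.linearCombination_apply, Finsupp.sum_fintype _ _ (by simp)]
      apply Finset.sum_congr rfl
      intro i _
      by_cases hi : (i : ℕ) < s
      · rw [hc]; simp only [if_pos hi, smul_eq_mul]; ring
      · have : cl i = 0 := by
          by_contra hne
          have hmem := (Finsupp.mem_supported R cl).mp hclsupp (Finsupp.mem_support_iff.mpr hne)
          exact hi (Fin.lt_def.mp hmem)
        simp [hc, if_neg hi, this]
    -- the new relation
    set w' : Fin r → R := fun j => if (j : ℕ) < s then w j + θ j₀ * c j else 0 with hw'
    have hrel' : ∑ j, θ j * w' j = 0 := by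
      have hpt : ∀ j : Fin r, θ j * w' j =
          (θ j * w j + θ j₀ * (θ j * c j)) - (if j = j₀ then θ j₀ * w j₀ else 0) := by
        intro j
        by_cases hjs : (j : ℕ) < s
        · have hne : j ≠ j₀ := by
            intro h; rw [h] at hjs; exact lt_irrefl s hjs
          rw [hw']; simp only [if_pos hjs, if_neg hne]; ring
        · by_cases hj : j = j₀
          · have hcj : c j = 0 := hcz _ hjs
            have hwz : w' j = 0 := if_neg hjs
            rw [hwz, if_pos hj, ← hj, hcj]
            ring
          · have hwj : w j = 0 := by
              apply hsupp j
              intro hlt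
              rcases Nat.lt_succ_iff_lt_or_eq.mp hlt with h | h
              · exact hjs h
              · exact hj (Fin.ext h)
            have hcj : c j = 0 := hcz _ hjs
            rw [hw']; simp [if_neg hjs, if_neg hj, hwj, hcj]
      rw [Finset.sum_congr rfl fun j _ => hpt j]
      rw [Finset.sum_sub_distrib, Finset.sum_add_distrib, Finset.sum_ite_eq' Finset.univ j₀]
      simp only [Finset.mem_univ, if_pos, hrel, ← Finset.mul_sum, hcrep, zero_add]
      ring
    obtain ⟨u', hu'a, hu'd, hu's, hu'rep⟩ := ih (Nat.le_of_succ_le hs) w'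
      (fun j hj => if_neg hj) hrel'
    -- build the new matrix
    refine ⟨fun i j =>
      if (i : ℕ) < s then
        (if (j : ℕ) < s then u' i j else if (j : ℕ) = s then c i else 0)
      else if (i : ℕ) = s then (if (j : ℕ) < s then - c j else 0) else 0,
      ?_, ?_, ?_, ?_⟩
    · intro i j
      rcases lt_trichotomy (i : ℕ) s with hi | hi | hi <;>
        rcases lt_trichotomy (j : ℕ) s with hj | hj | hj <;>
        simp [hi, hj, Nat.lt_irrefl, not_lt_of_gt, Nat.ne_of_gt, Nat.ne_of_lt, hu'a i j, hu'd]
    · intro i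
      rcases lt_trichotomy (i : ℕ) s with hi | hi | hi <;>
        simp [hi, Nat.lt_irrefl, not_lt_of_gt, Nat.ne_of_gt, hu'd]
    · intro i j hij
      rcases hij with hi | hj
      · have h1 : ¬ (i : ℕ) < s := fun h => hi (Nat.lt_succ_of_lt h)
        have h2 : ¬ (i : ℕ) = s := fun h => hi (h ▸ Nat.lt_succ_self s)
        simp [h1, h2]
      · have h1 : ¬ (j : ℕ) < s := fun h => hj (Nat.lt_succ_of_lt h)
        have h2 : ¬ (j : ℕ) = s := fun h => hj (h ▸ Nat.lt_succ_self s)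
        by_cases hi : (i : ℕ) < s
        · simp [hi, h1, h2]
        · by_cases hi2 : (i : ℕ) = s <;> simp [hi, hi2, h1]
    · intro j
      by_cases hjs : (j : ℕ) < s
      · have hpt : ∀ i : Fin r, θ i *
            (if (i : ℕ) < s then
              (if (j : ℕ) < s then u' i j else if (j : ℕ) = s then c i else 0)
            else if (i : ℕ) = s then (if (j : ℕ) < s then - c j else 0) else 0) =
            θ i * u' i j + (if i = j₀ then -(θ j₀ * c j) else 0) := by
          intro i
          rcases lt_trichotomy (i : ℕ) s with hi | hi | hi
          · have hne : i ≠ j₀ := by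
              intro h; rw [h] at hi; exact lt_irrefl s hi
            simp [hi, hjs, hne]
          · have heq : i = j₀ := Fin.ext hi
            have hz : u' j₀ j = 0 := hu's j₀ j (Or.inl (by simp [hj₀]))
            rw [heq]
            simp [hj₀, Nat.lt_irrefl, hjs, hz, mul_neg]
            rw [← hj₀, hz, mul_zero]
          · have hne : i ≠ j₀ := by
              intro h; rw [h] at hi; exact lt_irrefl s hi
            have h1 : ¬ (i : ℕ) < s := not_lt_of_gt hi
            have h2 : ¬ (i : ℕ) = s := Nat.ne_of_gt hi
            have : u' i j = 0 := hu's i j (Or.inl h1)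
            simp [h1, h2, hne, this]
        rw [Finset.sum_congr rfl fun i _ => hpt i]
        rw [Finset.sum_add_distrib, Finset.sum_ite_eq' Finset.univ j₀]
        have : w' j = w j + θ j₀ * c j := if_pos hjs
        rw [← hu'rep j, this]
        simp
      · by_cases hj : (j : ℕ) = s
        · have heq : j = j₀ := Fin.ext hj
          have hpt : ∀ i : Fin r, θ i *
              (if (i : ℕ) < s then
                (if (j : ℕ) < s then u' i j else if (j : ℕ) = s then c i else 0)
              else if (i : ℕ) = s then (if (j : ℕ) < s then - c j else 0) else 0) =
              θ i * c i := by
            intro i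
            by_cases hi : (i : ℕ) < s
            · simp [hi, hjs, hj]
            · have : c i = 0 := hcz _ hi
              by_cases hi2 : (i : ℕ) = s <;> simp [hi, hi2, hjs, this]
          rw [Finset.sum_congr rfl fun i _ => hpt i, hcrep, heq]
        · have hwj : w j = 0 := by
            apply hsupp j
            intro hlt
            rcases Nat.lt_succ_iff_lt_or_eq.mp hlt with h | h
            · exact hjs h
            · exact hj h
          have hpt : ∀ i : Fin r, θ i *
              (if (i : ℕ) < s then
                (if (j : ℕ) < s then u' i j else if (j : ℕ) = s then c i else 0)
              else if (i : ℕ) = s then (if (j : ℕ) < s then - c j else 0) else 0) = 0 := by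
            intro i
            by_cases hi : (i : ℕ) < s
            · simp [hi, hjs, hj]
            · by_cases hi2 : (i : ℕ) = s <;> simp [hi, hi2, hjs]
          rw [Finset.sum_congr rfl fun i _ => hpt i, hwj]
          simp



lemma koszul (hreg : IsRegularSeq θ) (w : Fin r → R) (hrel : ∑ j, θ j * w j = 0) :
    ∃ u : Fin r → Fin r → R, (∀ i j, u i j = - u j i) ∧ (∀ i, u i i = 0) ∧
      (∀ j, w j = ∑ i, θ i * u i j) := by
  obtain ⟨u, h1, h2, _, h4⟩ := koszul_aux hreg r le_rfl w (fun j hj => absurd j.isLt hj) hrel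
  exact ⟨u, h1, h2, h4⟩

lemma sum_antisym {M : Type*} [AddCommGroup M] {n : ℕ} (F : Fin n → Fin n → M)
    (ha : ∀ i j, F i j = - F j i) (hd : ∀ i, F i i = 0) :
    (∑ i, ∑ j, F i j) = 0 := by
  rw [← Finset.sum_product']
  refine Finset.sum_ninvolution (fun p => (p.2, p.1)) ?_ ?_ ?_ ?_
  · intro a
    simp only
    rw [ha a.1 a.2]
    exact neg_add_cancel _
  · intro a hfa hc
    apply hfa
    have : a.1 = a.2 := by
      have := congrArg Prod.fst hc
      simpa using this.symm
    rw [this]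
    exact hd _
  · intro a; exact Finset.mem_univ _
  · intro a; rfl

end Koszul


section Graded
variable {k R : Type*} [Field k] [CommRing R] [Algebra k R]
  (𝒜 : ℕ → Submodule k R) [GradedAlgebra 𝒜]
  {r : ℕ} {θ : Fin r → R} {d : Fin r → ℕ}

lemma comp_mem_adjoin (hmem : ∀ j, θ j ∈ 𝒜 (d j)) {x : R}
    (hx : x ∈ Algebra.adjoin k (Set.range θ)) :
    ∀ n, (DirectSum.decompose 𝒜 x n : R) ∈ Algebra.adjoin k (Set.range θ) := by
  classical
  refine Algebra.adjoin_induction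
    (p := fun x _ => ∀ n, (DirectSum.decompose 𝒜 x n : R) ∈ Algebra.adjoin k (Set.range θ))
    ?_ ?_ ?_ ?_ hx
  · rintro x ⟨j, rfl⟩ n
    rcases eq_or_ne (d j) n with h | h
    · rw [← h, DirectSum.decompose_of_mem_same 𝒜 (hmem j)]
      exact Algebra.subset_adjoin ⟨j, rfl⟩
    · rw [DirectSum.decompose_of_mem_ne 𝒜 (hmem j) h]
      exact zero_mem _
  · intro c n
    have h0 : algebraMap k R c ∈ 𝒜 0 := by
      rw [Algebra.algebraMap_eq_smul_one]
      exact Submodule.smul_mem _ _ (SetLike.one_mem_graded 𝒜)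
    rcases eq_or_ne (0 : ℕ) n with h | h
    · rw [← h, DirectSum.decompose_of_mem_same 𝒜 h0]
      exact Subalgebra.algebraMap_mem _ c
    · rw [DirectSum.decompose_of_mem_ne 𝒜 h0 h]
      exact zero_mem _
  · intro x y _ _ ihx ihy n
    rw [DirectSum.decompose_add]
    simp only [DirectSum.add_apply, Submodule.coe_add]
    exact add_mem (ihx n) (ihy n)
  · intro x y _ _ ihx ihy n
    rw [DirectSum.decompose_mul, DirectSum.coe_mul_apply]
    exact Subalgebra.sum_mem _ fun ij _ => mul_mem (ihx ij.1) (ihy ij.2)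

lemma adjoin_decomp {x : R} (hx : x ∈ Algebra.adjoin k (Set.range θ)) :
    ∃ (c : k) (t : Fin r → R), (∀ j, t j ∈ Algebra.adjoin k (Set.range θ)) ∧
      x = algebraMap k R c + ∑ j, θ j * t j := by
  classical
  refine Algebra.adjoin_induction
    (p := fun x _ => ∃ (c : k) (t : Fin r → R),
      (∀ j, t j ∈ Algebra.adjoin k (Set.range θ)) ∧
      x = algebraMap k R c + ∑ j, θ j * t j)
    ?_ ?_ ?_ ?_ hx
  · rintro x ⟨j, rfl⟩
    refine ⟨0, fun i => if i = j then 1 else 0, fun i => ?_, ?_⟩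
    · dsimp only
      by_cases h : i = j
      · rw [if_pos h]; exact one_mem _
      · rw [if_neg h]; exact zero_mem _
    · rw [map_zero, zero_add]
      have hpt : ∀ i : Fin r, θ i * (if i = j then (1:R) else 0) = if i = j then θ i else 0 := by
        intro i; by_cases h : i = j <;> simp [h]
      rw [Finset.sum_congr rfl fun i _ => hpt i, Finset.sum_ite_eq' Finset.univ j θ]
      simp
  · intro c
    exact ⟨c, 0, fun j => zero_mem _, by simp⟩
  · rintro x y _ _ ⟨c₁, t₁, ht₁, hx₁⟩ ⟨c₂, t₂, ht₂, hx₂⟩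
    exact ⟨c₁ + c₂, t₁ + t₂, fun j => add_mem (ht₁ j) (ht₂ j), by
      rw [hx₁, hx₂, map_add]
      simp only [Pi.add_apply, mul_add, Finset.sum_add_distrib]
      ring⟩
  · rintro x y _ hyA ⟨c₁, t₁, ht₁, hx₁⟩ ⟨c₂, t₂, ht₂, hx₂⟩
    refine ⟨c₁ * c₂, fun j => algebraMap k R c₁ * t₂ j + t₁ j * y,
      fun j => add_mem (mul_mem (Subalgebra.algebraMap_mem _ _) (ht₂ j))
        (mul_mem (ht₁ j) hyA), ?_⟩
    have hsum : ∑ j, θ j * (algebraMap k R c₁ * t₂ j + t₁ j * y) =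
        algebraMap k R c₁ * ∑ j, θ j * t₂ j + (∑ j, θ j * t₁ j) * y := by
      simp only [mul_add]
      rw [Finset.sum_add_distrib, Finset.mul_sum, Finset.sum_mul]
      congr 1 <;> exact Finset.sum_congr rfl fun j _ => by ring
    rw [hsum, map_mul]
    calc x * y = (algebraMap k R c₁ + ∑ j, θ j * t₁ j) * y := by rw [← hx₁]
      _ = algebraMap k R c₁ * (algebraMap k R c₂ + ∑ j, θ j * t₂ j)
            + (∑ j, θ j * t₁ j) * y := by rw [← hx₂]; ring
      _ = _ := by ring

section Span
variable {Λ : Type*} {v : Λ → R} {e : Λ → ℕ}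

lemma grade_mem_span (hd : ∀ j, 0 < d j) (hmem : ∀ j, θ j ∈ 𝒜 (d j))
    (hv : ∀ l, v l ∈ 𝒜 (e l))
    (hspan : Submodule.span k
      (Set.range fun l => Ideal.Quotient.mk (Ideal.span (Set.range θ)) (v l)) = ⊤) :
    ∀ n, ∀ x ∈ 𝒜 n, x ∈ Submodule.span ↥(Algebra.adjoin k (Set.range θ)) (Set.range v) := by
  classical
  intro n
  induction n using Nat.strong_induction_on with
  | _ n ih =>
  intro x hx
  have hIhom : Ideal.IsHomogeneous 𝒜 (Ideal.span (Set.range θ)) :=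
    Ideal.homogeneous_span 𝒜 _ (by rintro y ⟨j, rfl⟩; exact ⟨d j, hmem j⟩)
  have hmk : Ideal.Quotient.mk (Ideal.span (Set.range θ)) x ∈ Submodule.span k
      (Set.range fun l => Ideal.Quotient.mk (Ideal.span (Set.range θ)) (v l)) := by
    rw [hspan]; trivial
  obtain ⟨cf, hcf⟩ := Finsupp.mem_span_range_iff_exists_finsupp.mp hmk
  set y : R := ∑ l ∈ cf.support, cf l • v l with hy
  have hzI : x - y ∈ Ideal.span (Set.range θ) := by
    rw [← Ideal.Quotient.eq_zero_iff_mem]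
    have : Ideal.Quotient.mk (Ideal.span (Set.range θ)) y
        = Ideal.Quotient.mk (Ideal.span (Set.range θ)) x := by
      rw [← hcf, Finsupp.sum, hy]
      rw [← Ideal.Quotient.mkₐ_eq_mk k, map_sum]
      exact Finset.sum_congr rfl fun l _ => map_smul (Ideal.Quotient.mkₐ k _) _ _
    rw [map_sub, this, sub_self]
  set y' : R := ∑ l ∈ cf.support, if e l = n then cf l • v l else 0 with hy'
  have hdec : (DirectSum.decompose 𝒜 (x - y) n : R) = x - y' := by
    rw [DirectSum.decompose_sub]
    simp only [DirectSum.sub_apply, AddSubgroupClass.coe_sub]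
    congr 1
    · exact DirectSum.decompose_of_mem_same 𝒜 hx
    · rw [hy, DirectSum.decompose_sum]
      rw [DFinsupp.finset_sum_apply, AddSubmonoidClass.coe_finset_sum]
      refine Finset.sum_congr rfl fun l _ => ?_
      rw [DirectSum.decompose_smul]
      rcases eq_or_ne (e l) n with h | h
      · rw [if_pos h, DFinsupp.smul_apply, Submodule.coe_smul]
        rw [← h, DirectSum.decompose_of_mem_same 𝒜 (hv l)]
      · rw [if_neg h, DFinsupp.smul_apply, Submodule.coe_smul]
        rw [DirectSum.decompose_of_mem_ne 𝒜 (hv l) h, smul_zero]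
  have hy'A : y' ∈ 𝒜 n := by
    apply Submodule.sum_mem
    intro l _
    split
    · next h => exact Submodule.smul_mem _ _ (h ▸ hv l)
    · exact zero_mem _
  have hy'S : y' ∈ Submodule.span ↥(Algebra.adjoin k (Set.range θ)) (Set.range v) := by
    apply Submodule.sum_mem
    intro l _
    split
    · have hvS : v l ∈ Submodule.span ↥(Algebra.adjoin k (Set.range θ)) (Set.range v) :=
        Submodule.subset_span ⟨l, rfl⟩
      have := Submodule.smul_mem _
        (⟨algebraMap k R (cf l), Subalgebra.algebraMap_mem _ _⟩ :
          ↥(Algebra.adjoin k (Set.range θ))) hvS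
      rwa [Subalgebra.smul_def, smul_eq_mul, ← Algebra.smul_def] at this
    · exact zero_mem _
  have hxy'I : x - y' ∈ Ideal.span (Set.range θ) := hdec ▸ hIhom n hzI
  have hxy'A : x - y' ∈ 𝒜 n := hdec ▸ SetLike.coe_mem _
  obtain ⟨t, ht⟩ := Ideal.mem_span_range_iff_exists_fun.mp hxy'I
  have hrep : x - y' = ∑ j, if d j ≤ n then (DirectSum.decompose 𝒜 (t j) (n - d j) : R) * θ j
      else 0 := by
    conv_lhs => rw [← DirectSum.decompose_of_mem_same 𝒜 hxy'A, ← ht]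
    rw [DirectSum.decompose_sum, DFinsupp.finset_sum_apply, AddSubmonoidClass.coe_finset_sum]
    exact Finset.sum_congr rfl fun j _ =>
      DirectSum.coe_decompose_mul_of_right_mem 𝒜 n (hmem j)
  have hterm : ∀ j : Fin r, (if d j ≤ n then (DirectSum.decompose 𝒜 (t j) (n - d j) : R) * θ j
      else 0) ∈ Submodule.span ↥(Algebra.adjoin k (Set.range θ)) (Set.range v) := by
    intro j
    split
    · next hdj =>
      have hlt : n - d j < n := Nat.sub_lt (lt_of_lt_of_le (hd j) hdj) (hd j)
      have hmemS := ih (n - d j) hlt _ (SetLike.coe_mem (DirectSum.decompose 𝒜 (t j) (n - d j)))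
      have := Submodule.smul_mem _
        (⟨θ j, Algebra.subset_adjoin ⟨j, rfl⟩⟩ : ↥(Algebra.adjoin k (Set.range θ))) hmemS
      rwa [Subalgebra.smul_def, smul_eq_mul, mul_comm] at this
    · exact zero_mem _
  have : x = y' + ∑ j, (if d j ≤ n then (DirectSum.decompose 𝒜 (t j) (n - d j) : R) * θ j
      else 0) := by rw [← hrep]; ring
  rw [this]
  exact Submodule.add_mem _ hy'S (Submodule.sum_mem _ fun j _ => hterm j)

lemma span_adjoin_top (hd : ∀ j, 0 < d j) (hmem : ∀ j, θ j ∈ 𝒜 (d j))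
    (hv : ∀ l, v l ∈ 𝒜 (e l))
    (hspan : Submodule.span k
      (Set.range fun l => Ideal.Quotient.mk (Ideal.span (Set.range θ)) (v l)) = ⊤) :
    Submodule.span ↥(Algebra.adjoin k (Set.range θ)) (Set.range v) = ⊤ := by
  classical
  rw [eq_top_iff]
  intro x _
  rw [← DirectSum.sum_support_decompose 𝒜 x]
  exact Submodule.sum_mem _ fun n _ =>
    grade_mem_span 𝒜 hd hmem hv hspan n _ (SetLike.coe_mem _)

lemma comp_rel (hv : ∀ l, v l ∈ 𝒜 (e l)) (N : Finset Λ) (p : Λ → R)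
    (hrel : ∑ l ∈ N, p l * v l = 0) (M : ℕ) :
    ∑ l ∈ N, (if e l ≤ M then (DirectSum.decompose 𝒜 (p l) (M - e l) : R) else 0) * v l = 0 := by
  classical
  have h0 : (DirectSum.decompose 𝒜 (∑ l ∈ N, p l * v l) M : R) = 0 := by
    rw [hrel, DirectSum.decompose_zero]; rfl
  rw [DirectSum.decompose_sum, DFinsupp.finset_sum_apply, AddSubmonoidClass.coe_finset_sum] at h0
  refine Eq.trans (Finset.sum_congr rfl fun l _ => ?_) h0
  rw [DirectSum.coe_decompose_mul_of_right_mem 𝒜 M (hv l)]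
  split <;> simp

lemma homog_rel_zero
    (hd : ∀ j, 0 < d j) (hmem : ∀ j, θ j ∈ 𝒜 (d j)) (hreg : IsRegularSeq θ)
    (hv : ∀ l, v l ∈ 𝒜 (e l))
    (hli : LinearIndependent k
      fun l => Ideal.Quotient.mk (Ideal.span (Set.range θ)) (v l))
    (hspan : Submodule.span k
      (Set.range fun l => Ideal.Quotient.mk (Ideal.span (Set.range θ)) (v l)) = ⊤) :
    ∀ n : ℕ, ∀ (L : Finset Λ) (b : Λ → R),
      (∀ l, b l ∈ Algebra.adjoin k (Set.range θ)) →
      (∀ l, b l ∈ 𝒜 (n - e l)) →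
      (∀ l, n < e l → b l = 0) →
      (∀ l, l ∉ L → b l = 0) →
      (∑ l ∈ L, b l * v l) = 0 → ∀ l, b l = 0 := by
  classical
  intro n
  induction n using Nat.strong_induction_on with
  | _ n ih =>
  intro L b hbA hb𝒜 hbe hbL hrel
  -- Step 1: write b l = const + ∑ θ j * t, and kill the constants
  choose cc tt htt hbrep using fun l => adjoin_decomp (hbA l)
  have hmkθ : ∀ j, Ideal.Quotient.mk (Ideal.span (Set.range θ)) (θ j) = 0 := fun j =>
    Ideal.Quotient.eq_zero_iff_mem.mpr (Ideal.subset_span ⟨j, rfl⟩)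
  have hmkb : ∀ l, Ideal.Quotient.mk (Ideal.span (Set.range θ)) (b l)
      = algebraMap k _ (cc l) := by
    intro l
    rw [hbrep l, map_add, map_sum]
    have hz : ∀ j : Fin r, Ideal.Quotient.mk (Ideal.span (Set.range θ)) (θ j * tt l j) = 0 :=
      fun j => by rw [map_mul, hmkθ j, zero_mul]
    rw [Finset.sum_congr rfl fun j _ => hz j, Finset.sum_const_zero, add_zero,
      Ideal.Quotient.mk_algebraMap]
  have hcc : ∀ l ∈ L, cc l = 0 := by
    have h0 : ∑ l ∈ L, cc l • (Ideal.Quotient.mk (Ideal.span (Set.range θ)) (v l)) = 0 := by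
      have hc := congrArg (Ideal.Quotient.mk (Ideal.span (Set.range θ))) hrel
      rw [map_sum, map_zero] at hc
      rw [← hc]
      exact Finset.sum_congr rfl fun l _ => by rw [map_mul, hmkb l, Algebra.smul_def]
    exact linearIndependent_iff'.mp hli L cc h0
  -- Step 2: homogeneous representation of b l
  set t' : Λ → Fin r → R := fun l j =>
    if l ∈ L ∧ d j ≤ n - e l
    then (DirectSum.decompose 𝒜 (tt l j) ((n - e l) - d j) : R) else 0 with ht'
  have ht'A : ∀ l j, t' l j ∈ Algebra.adjoin k (Set.range θ) := by
    intro l j; rw [ht']; dsimp only; split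
    · exact comp_mem_adjoin 𝒜 hmem (htt l j) _
    · exact zero_mem _
  have hbrep' : ∀ l, b l = ∑ j, θ j * t' l j := by
    intro l
    by_cases hlL : l ∈ L
    · have hb0 : b l = ∑ j, θ j * tt l j := by
        rw [hbrep l, hcc l hlL, map_zero, zero_add]
      conv_lhs => rw [← DirectSum.decompose_of_mem_same 𝒜 (hb𝒜 l), hb0]
      rw [DirectSum.decompose_sum, DFinsupp.finset_sum_apply, AddSubmonoidClass.coe_finset_sum]
      refine Finset.sum_congr rfl fun j _ => ?_
      rw [DirectSum.coe_decompose_mul_of_left_mem 𝒜 (n - e l) (hmem j)]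
      by_cases hj : d j ≤ n - e l
      · rw [if_pos hj, ht']; dsimp only; rw [if_pos (And.intro hlL hj)]
      · rw [if_neg hj, ht']; dsimp only; rw [if_neg (fun h => hj h.2), mul_zero]
    · rw [hbL l hlL]
      symm
      apply Finset.sum_eq_zero
      intro j _
      rw [ht']; dsimp only; rw [if_neg (fun h => hlL h.1), mul_zero]
  -- base case n = 0
  rcases Nat.eq_zero_or_pos n with hn0 | hnpos
  · intro l
    rw [hbrep' l]
    apply Finset.sum_eq_zero
    intro j _
    rw [ht']; dsimp only
    rw [if_neg, mul_zero]
    rintro ⟨-, hj⟩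
    rw [hn0] at hj
    simp only [Nat.zero_sub, Nat.le_zero] at hj
    exact (hd j).ne' hj
  -- Step 3: Koszul
  set w : Fin r → R := fun j => ∑ l ∈ L, t' l j * v l with hw
  have hwrel : ∑ j, θ j * w j = 0 := by
    have hsw : ∑ j, θ j * w j = ∑ l ∈ L, (∑ j, θ j * t' l j) * v l := by
      rw [hw]
      simp only [Finset.mul_sum]
      rw [Finset.sum_comm]
      refine Finset.sum_congr rfl fun l _ => ?_
      rw [Finset.sum_mul]
      exact Finset.sum_congr rfl fun j _ => by ring
    rw [hsw, ← hrel]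
    exact Finset.sum_congr rfl fun l _ => by rw [← hbrep' l]
  obtain ⟨u, hua, hud, hurep⟩ := koszul hreg w hwrel
  -- Step 4: represent the u's over the span
  have hspanA := span_adjoin_top 𝒜 hd hmem hv hspan
  have hrepu : ∀ i j : Fin r, ∃ σ : Λ →₀ ↥(Algebra.adjoin k (Set.range θ)),
      (σ.sum fun l a => a • v l) = u i j := by
    intro i j
    have hm : u i j ∈ Submodule.span ↥(Algebra.adjoin k (Set.range θ)) (Set.range v) := by
      rw [hspanA]; trivial
    exact Finsupp.mem_span_range_iff_exists_finsupp.mp hm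
  choose σ hσ using hrepu
  set N : Finset Λ := L ∪ Finset.univ.biUnion (fun i : Fin r =>
    Finset.univ.biUnion fun j : Fin r => (σ i j).support) with hN
  have hLN : L ⊆ N := Finset.subset_union_left
  have hsub : ∀ i j : Fin r, (σ i j).support ⊆ N := by
    intro i j l hl
    rw [hN]
    apply Finset.mem_union_right
    exact Finset.mem_biUnion.mpr ⟨i, Finset.mem_univ _,
      Finset.mem_biUnion.mpr ⟨j, Finset.mem_univ _, hl⟩⟩
  set g : Fin r → Fin r → Λ → R := fun i j l => ((σ i j) l : R) with hg
  have hgz : ∀ i j l, l ∉ N → g i j l = 0 := by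
    intro i j l hl
    rw [hg]; dsimp only
    rw [Finsupp.notMem_support_iff.mp (fun hc => hl (hsub i j hc))]
    rfl
  have hgsum : ∀ i j, ∑ l ∈ N, g i j l * v l = u i j := by
    intro i j
    rw [← hσ i j, Finsupp.sum]
    rw [← Finset.sum_subset (hsub i j) (fun l _ hl => by
      rw [hg]; dsimp only
      rw [Finsupp.notMem_support_iff.mp hl]
      simp)]
    exact Finset.sum_congr rfl fun l _ => by
      rw [hg, Subalgebra.smul_def, smul_eq_mul]
  -- antisymmetrized coefficients
  set G : Fin r → Fin r → Λ → R := fun i j l =>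
    if (i : ℕ) < (j : ℕ) then g i j l
    else if (j : ℕ) < (i : ℕ) then - g j i l else 0 with hG
  have hGA : ∀ i j l, G i j l ∈ Algebra.adjoin k (Set.range θ) := by
    intro i j l; rw [hG]; dsimp only
    split
    · exact SetLike.coe_mem _
    split
    · exact neg_mem (SetLike.coe_mem _)
    · exact zero_mem _
  have hGanti : ∀ i j l, G i j l = - G j i l := by
    intro i j l; rw [hG]; dsimp only
    rcases lt_trichotomy (i : ℕ) (j : ℕ) with h | h | h
    · simp [h, lt_asymm h]
    · simp [h]
    · simp [h, lt_asymm h]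
  have hGdiag : ∀ i l, G i i l = 0 := by
    intro i l; rw [hG]; dsimp only
    rw [if_neg (lt_irrefl _), if_neg (lt_irrefl _)]
  have hGz : ∀ i j l, l ∉ N → G i j l = 0 := by
    intro i j l hl; rw [hG]; dsimp only
    rw [hgz i j l hl, hgz j i l hl]
    simp
  have hGsum : ∀ i j, ∑ l ∈ N, G i j l * v l = u i j := by
    intro i j
    rcases lt_trichotomy (i : ℕ) (j : ℕ) with h | h | h
    · rw [← hgsum i j]
      refine Finset.sum_congr rfl fun l _ => ?_
      rw [hG]; dsimp only; rw [if_pos h]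
    · have hij : i = j := Fin.ext h
      rw [hij]
      have hz : ∀ l ∈ N, G j j l * v l = 0 := fun l _ => by rw [hGdiag, zero_mul]
      rw [Finset.sum_congr rfl hz, Finset.sum_const_zero, hud j]
    · have : ∑ l ∈ N, G i j l * v l = - ∑ l ∈ N, g j i l * v l := by
        rw [← Finset.sum_neg_distrib]
        refine Finset.sum_congr rfl fun l _ => ?_
        rw [hG]; dsimp only; rw [if_neg (lt_asymm h), if_pos h, neg_mul]
      rw [this, hgsum j i, ← hua i j]  -- u i j = - u j i so -u j i = u i j
  -- Step 5: per-j relations and recursion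
  have hQzero : ∀ j : Fin r, ∀ l,
      (if e l ≤ n - d j
        then (DirectSum.decompose 𝒜 ((if l ∈ L then t' l j else 0)
          - ∑ i, θ i * G i j l) ((n - d j) - e l) : R) else 0) = 0 := by
    intro j
    set q : Λ → R := fun l => (if l ∈ L then t' l j else 0) - ∑ i, θ i * G i j l with hqd
    have hqA : ∀ l, q l ∈ Algebra.adjoin k (Set.range θ) := by
      intro l; rw [hqd]; dsimp only
      refine sub_mem ?_ (Subalgebra.sum_mem _ fun i _ =>
        mul_mem (Algebra.subset_adjoin ⟨i, rfl⟩) (hGA i j l))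
      split
      · exact ht'A l j
      · exact zero_mem _
    have hqrel : ∑ l ∈ N, q l * v l = 0 := by
      have h1 : ∑ l ∈ N, (if l ∈ L then t' l j else 0) * v l = w j := by
        rw [hw, ← Finset.sum_subset hLN (fun l _ hl => by rw [if_neg hl, zero_mul])]
        exact Finset.sum_congr rfl fun l hl => by rw [if_pos hl]
      have h2 : ∑ l ∈ N, (∑ i, θ i * G i j l) * v l = w j := by
        have hpt : ∀ l, (∑ i, θ i * G i j l) * v l = ∑ i, θ i * (G i j l * v l) := by
          intro l
          rw [Finset.sum_mul]
          exact Finset.sum_congr rfl fun i _ => by ring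
        rw [Finset.sum_congr rfl fun l _ => hpt l, Finset.sum_comm]
        have hptc : ∀ i : Fin r, ∑ l ∈ N, θ i * (G i j l * v l) = θ i * u i j := by
          intro i
          rw [← Finset.mul_sum, hGsum i j]
        rw [Finset.sum_congr rfl fun i _ => hptc i]
        exact (hurep j).symm
      rw [hqd]
      simp only [sub_mul]
      rw [Finset.sum_sub_distrib, h1, h2, sub_self]
    intro l
    refine ih (n - d j) (Nat.sub_lt hnpos (hd j)) N
      (fun l => if e l ≤ n - d j
        then (DirectSum.decompose 𝒜 (q l) ((n - d j) - e l) : R) else 0)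
      ?_ ?_ ?_ ?_ ?_ l
    · intro l'; dsimp only; split
      · exact comp_mem_adjoin 𝒜 hmem (hqA l') _
      · exact zero_mem _
    · intro l'; dsimp only; split
      · exact SetLike.coe_mem _
      · exact zero_mem _
    · intro l' hl'; dsimp only; exact if_neg (not_le.mpr hl')
    · intro l' hl'; dsimp only
      have hq0 : q l' = 0 := by
        rw [hqd]; dsimp only
        rw [if_neg (fun h => hl' (hLN h))]
        have hptc : ∀ i : Fin r, θ i * G i j l' = 0 := fun i => by
          rw [hGz i j l' hl', mul_zero]
        rw [Finset.sum_congr rfl fun i _ => hptc i]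
        simp
      rw [hq0]
      split
      · rw [DirectSum.decompose_zero]; rfl
      · rfl
    · exact comp_rel 𝒜 hv N q hqrel (n - d j)
  -- Step 6: extraction and final cancellation
  intro l
  by_cases hlL : l ∈ L
  swap
  · exact hbL l hlL
  have hkey : ∀ j : Fin r, d j ≤ n - e l →
      t' l j = ∑ i, (if d i ≤ (n - e l) - d j
        then θ i * (DirectSum.decompose 𝒜 (G i j l) (((n - e l) - d j) - d i) : R) else 0) := by
    intro j hj
    have h1 := hQzero j l
    have hel : e l ≤ n - d j := by
      have := hd j
      omega
    rw [if_pos hel] at h1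
    have hidx : (n - d j) - e l = (n - e l) - d j := by omega
    rw [hidx, if_pos hlL] at h1
    rw [DirectSum.decompose_sub] at h1
    rw [DirectSum.sub_apply, AddSubgroupClass.coe_sub] at h1
    have ht'mem : t' l j ∈ 𝒜 ((n - e l) - d j) := by
      rw [ht']; dsimp only; rw [if_pos (And.intro hlL hj)]
      exact SetLike.coe_mem _
    rw [DirectSum.decompose_of_mem_same 𝒜 ht'mem] at h1
    rw [DirectSum.decompose_sum, DFinsupp.finset_sum_apply,
      AddSubmonoidClass.coe_finset_sum] at h1
    rw [Finset.sum_congr rfl fun i (_ : i ∈ Finset.univ) =>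
      DirectSum.coe_decompose_mul_of_left_mem 𝒜 ((n - e l) - d j) (hmem i)] at h1
    exact sub_eq_zero.mp h1
  rw [hbrep' l]
  have hF : ∀ j : Fin r, θ j * t' l j =
      ∑ i, (if d j ≤ n - e l ∧ d i ≤ (n - e l) - d j
        then θ j * (θ i * (DirectSum.decompose 𝒜 (G i j l) (((n - e l) - d j) - d i) : R))
        else 0) := by
    intro j
    by_cases hj : d j ≤ n - e l
    · rw [hkey j hj, Finset.mul_sum]
      refine Finset.sum_congr rfl fun i _ => ?_
      by_cases hi : d i ≤ (n - e l) - d j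
      · rw [if_pos hi, if_pos (And.intro hj hi)]
      · rw [if_neg hi, if_neg (fun h => hi h.2), mul_zero]
    · have ht'0 : t' l j = 0 := by
        rw [ht']; dsimp only; exact if_neg (fun h => hj h.2)
      rw [ht'0, mul_zero]
      symm
      exact Finset.sum_eq_zero fun i _ => if_neg (fun h => hj h.1)
  rw [Finset.sum_congr rfl fun j _ => hF j]
  apply sum_antisym
  · intro a b
    have hcond : (d a ≤ n - e l ∧ d b ≤ (n - e l) - d a)
        ↔ (d b ≤ n - e l ∧ d a ≤ (n - e l) - d b) := by omega
    have hidx : ((n - e l) - d a) - d b = ((n - e l) - d b) - d a := by omega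
    by_cases h : d a ≤ n - e l ∧ d b ≤ (n - e l) - d a
    · rw [if_pos h, if_pos (hcond.mp h)]
      rw [hGanti b a l, DirectSum.decompose_neg, DFinsupp.neg_apply,
        NegMemClass.coe_neg, hidx]
      ring
    · rw [if_neg h, if_neg (fun hc => h (hcond.mpr hc)), neg_zero]
  · intro a
    split
    · rw [hGdiag a l, DirectSum.decompose_zero]
      simp
    · rfl

end Span

end Graded

/-- If `θ 0, …, θ (r-1)` is a regular sequence of homogeneous positive-degree elements
of an ℕ-graded commutative `k`-algebra `R` (with `R₀ ≅ k`, finitely generated,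
finite-dimensional graded pieces), and `(v l)` is a family of homogeneous elements of `R`
whose images in `R/(θ 0, …, θ (r-1))` form a `k`-basis, then `(v l)` is a basis of `R`
as a module over the subalgebra `k[θ 0, …, θ (r-1)]`. -/
theorem basis_of_regularSeq {k R : Type*} [Field k] [CommRing R] [Algebra k R]
    (𝒜 : ℕ → Submodule k R) [GradedAlgebra 𝒜]
    (hR0 : ∀ x ∈ 𝒜 0, ∃ c : k, x = algebraMap k R c)
    (hfd : ∀ i, FiniteDimensional k (𝒜 i))
    (hfg : Algebra.FiniteType k R)
    {r : ℕ} (θ : Fin r → R) (d : Fin r → ℕ)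
    (hd : ∀ j, 0 < d j) (hmem : ∀ j, θ j ∈ 𝒜 (d j))
    (hreg : IsRegularSeq θ)
    {Λ : Type*} (v : Λ → R) (e : Λ → ℕ) (hv : ∀ l, v l ∈ 𝒜 (e l))
    (hli : LinearIndependent k
      fun l => Ideal.Quotient.mk (Ideal.span (Set.range θ)) (v l))
    (hspan : Submodule.span k
      (Set.range fun l => Ideal.Quotient.mk (Ideal.span (Set.range θ)) (v l)) = ⊤) :
    LinearIndependent ↥(Algebra.adjoin k (Set.range θ)) v ∧
      Submodule.span ↥(Algebra.adjoin k (Set.range θ)) (Set.range v) = ⊤ := by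
  classical
  refine ⟨?_, span_adjoin_top 𝒜 hd hmem hv hspan⟩
  rw [linearIndependent_iff']
  intro s gcoef hrel0 l0 hl0
  set b : Λ → R := fun l => if l ∈ s then (gcoef l : R) else 0 with hb
  have hbA : ∀ l, b l ∈ Algebra.adjoin k (Set.range θ) := by
    intro l; rw [hb]; dsimp only; split
    · exact SetLike.coe_mem _
    · exact zero_mem _
  have hbrel : ∑ l ∈ s, b l * v l = 0 := by
    refine Eq.trans (Finset.sum_congr rfl fun l hl => ?_) hrel0
    rw [hb]; dsimp only
    rw [if_pos hl, Subalgebra.smul_def, smul_eq_mul]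
  suffices hb0 : b l0 = 0 by
    have hco : (gcoef l0 : R) = 0 := by
      rw [← hb0, hb]; dsimp only; rw [if_pos hl0]
    exact Subtype.ext hco
  have hcomp : ∀ m : ℕ, (DirectSum.decompose 𝒜 (b l0) m : R) = 0 := by
    intro m
    have hBA : ∀ l, (if e l ≤ m + e l0
        then (DirectSum.decompose 𝒜 (b l) ((m + e l0) - e l) : R) else 0)
        ∈ Algebra.adjoin k (Set.range θ) := by
      intro l; split
      · exact comp_mem_adjoin 𝒜 hmem (hbA l) _
      · exact zero_mem _
    have hB𝒜 : ∀ l, (if e l ≤ m + e l0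
        then (DirectSum.decompose 𝒜 (b l) ((m + e l0) - e l) : R) else 0)
        ∈ 𝒜 ((m + e l0) - e l) := by
      intro l; split
      · exact SetLike.coe_mem _
      · exact zero_mem _
    have hBe : ∀ l, m + e l0 < e l → (if e l ≤ m + e l0
        then (DirectSum.decompose 𝒜 (b l) ((m + e l0) - e l) : R) else 0) = 0 :=
      fun l hl => if_neg (not_le.mpr hl)
    have hBL : ∀ l, l ∉ s → (if e l ≤ m + e l0
        then (DirectSum.decompose 𝒜 (b l) ((m + e l0) - e l) : R) else 0) = 0 := by
      intro l hl
      have hbz : b l = 0 := by rw [hb]; dsimp only; exact if_neg hl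
      split
      · rw [hbz, DirectSum.decompose_zero]; rfl
      · rfl
    have happ := homog_rel_zero 𝒜 hd hmem hreg hv hli hspan (m + e l0) s _
      hBA hB𝒜 hBe hBL (comp_rel 𝒜 hv s b hbrel (m + e l0)) l0
    have h1 : e l0 ≤ m + e l0 := by omega
    rw [if_pos h1] at happ
    have h2 : (m + e l0) - e l0 = m := by omega
    rwa [h2] at happ
  rw [← DirectSum.sum_support_decompose 𝒜 (b l0)]
  exact Finset.sum_eq_zero fun m _ => hcomp m
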